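/- Let P be a convex polyhedron in ℝ^3 with P ⊆ [0,1]^3 and vol(P) ≥ 1/15. Then there exists a translation v ∈ ℝ^3 such that the cube (1/107)·[0,1]^3 + v is contained in P. -/

import Mathlib

open MeasureTheory Set

lemma mem_of_between {E : Type*} [AddCommGroup E] [Module ℝ E] {A : Set E}
    (hA : Convex ℝ A) {x v : E} {a b t : ℝ}
    (ha : x + a • v ∈ A) (hb : x + b • v ∈ A) (h1 : a ≤ t) (h2 : t ≤ b) :
    x + t • v ∈ A := by
  rcases eq_or_lt_of_le (h1.trans h2) with h | h
  · have : t = a := le_antisymm (by rw [h]; exact h2) h1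
    rwa [this]
  · have hne : b - a ≠ 0 := by linarith
    have hθ : (t - a) / (b - a) ∈ Icc (0:ℝ) 1 := by
      constructor
      · apply div_nonneg <;> linarith
      · rw [div_le_one (by linarith)]; linarith
    have := hA.add_smul_sub_mem ha hb hθ
    have heq : x + a • v + ((t - a) / (b - a)) • (x + b • v - (x + a • v)) = x + t • v := by
      match_scalars
      all_goals field_simp
      all_goals ring
    rwa [heq] at this

lemma volume_box (c : Fin 3 → ℝ) :
    volume {x : EuclideanSpace ℝ (Fin 3) | ∀ m, x m ∈ Icc (0:ℝ) (c m)}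
      = ∏ m, ENNReal.ofReal (c m) := by
  have hmp := PiLp.volume_preserving_ofLp (Fin 3)
  have hset : {x : EuclideanSpace ℝ (Fin 3) | ∀ m, x m ∈ Icc (0:ℝ) (c m)}
      = (@WithLp.ofLp 2 (Fin 3 → ℝ)) ⁻¹' (Set.univ.pi fun m => Icc (0:ℝ) (c m)) := by
    ext x
    simp only [Set.mem_preimage, Set.mem_univ_pi, Set.mem_setOf_eq]
  rw [hset, hmp.measure_preimage ((MeasurableSet.univ_pi (fun m => measurableSet_Icc)).nullMeasurableSet)]
  rw [volume_pi_pi]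
  simp [Real.volume_Icc]

lemma erosion_volume (A : Set (EuclideanSpace ℝ (Fin 3))) (hA : Convex ℝ A)
    (hAm : MeasurableSet A)
    (hAsub : A ⊆ {x | ∀ m, x m ∈ Icc (0:ℝ) 1}) (i : Fin 3) (s : ℝ) (hs : 0 < s) :
    volume (A \ {x | x + s • EuclideanSpace.single i (1:ℝ) ∈ A}) ≤ ENNReal.ofReal s := by
  set v : EuclideanSpace ℝ (Fin 3) := s • EuclideanSpace.single i (1:ℝ) with hv
  have hvm : ∀ m, v m = s * (if m = i then 1 else 0) := by
    intro m; simp [hv, EuclideanSpace.single_apply]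
  set D : Set (EuclideanSpace ℝ (Fin 3)) := A \ {x | x + v ∈ A} with hD
  have hDm : MeasurableSet D := by
    apply hAm.diff
    have : {x : EuclideanSpace ℝ (Fin 3) | x + v ∈ A} = (fun x => x + v) ⁻¹' A := rfl
    rw [this]
    exact hAm.preimage (measurable_id.add_const v)
  have key : ∀ N : ℕ, (N : ENNReal) * volume D ≤ ENNReal.ofReal (1 + N * s) := by
    intro N
    set T : ℕ → Set (EuclideanSpace ℝ (Fin 3)) :=
      fun k => (fun x => x + (-(k:ℝ)) • v) ⁻¹' D with hT
    have hTvol : ∀ k, volume (T k) = volume D := fun k =>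
      measure_preimage_add_right volume _ D
    have hTm : ∀ k, MeasurableSet (T k) := fun k =>
      hDm.preimage (measurable_id.add_const _)
    have hdisj : Set.PairwiseDisjoint ↑(Finset.range N) T := by
      have main : ∀ k j : ℕ, k < j → ∀ x, x ∈ T k → x ∈ T j → False := by
        intro k j hkj x hxk hxj
        simp only [hT, Set.mem_preimage, hD, Set.mem_diff, Set.mem_setOf_eq] at hxk hxj
        obtain ⟨hk1, -⟩ := hxk
        obtain ⟨hj1, hj2⟩ := hxj
        apply hj2
        have heq : x + (-(j:ℝ)) • v + v = x + (1 - (j:ℝ)) • v := by module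
        rw [heq]
        have hjk : (k:ℝ) + 1 ≤ (j:ℝ) := by exact_mod_cast hkj
        exact mem_of_between hA hj1 hk1 (by linarith) (by linarith)
      intro k hk j hj hne
      rcases lt_or_gt_of_ne hne with h | h
      · exact Set.disjoint_left.2 fun x hx hx' => main k j h x hx hx'
      · exact Set.disjoint_left.2 fun x hx hx' => main j k h x hx' hx
    set c : Fin 3 → ℝ := fun m => if m = i then 1 + N * s else 1 with hc
    have hsub : (⋃ k ∈ Finset.range N, T k) ⊆ {x | ∀ m, x m ∈ Icc (0:ℝ) (c m)} := by
      intro x hx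
      simp only [Set.mem_iUnion, Finset.mem_range, exists_prop] at hx
      obtain ⟨k, hkN, hxk⟩ := hx
      have hy : x + (-(k:ℝ)) • v ∈ A := by
        simp only [hT, Set.mem_preimage, hD, Set.mem_diff] at hxk
        exact hxk.1
      have hy2 := hAsub hy
      intro m
      have hym := hy2 m
      have hcoord : (x + (-(k:ℝ)) • v) m = x m + (-(k:ℝ)) * v m := by
        simp [PiLp.add_apply, PiLp.smul_apply, smul_eq_mul]
      rw [hcoord, hvm m] at hym
      by_cases hmi : m = i
      · subst hmi
        rw [if_pos rfl, mul_one] at hym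
        simp only [hc, if_pos rfl]
        obtain ⟨hy1, hy2'⟩ := hym
        have hks : 0 ≤ (k:ℝ) * s := by positivity
        have hkN' : (k:ℝ) ≤ N := by exact_mod_cast hkN.le
        constructor
        · nlinarith
        · nlinarith
      · rw [if_neg hmi, mul_zero, mul_zero, add_zero] at hym
        simp only [hc, if_neg hmi]
        exact hym
    have hunion : ∑ k ∈ Finset.range N, volume (T k)
        = volume (⋃ k ∈ Finset.range N, T k) :=
      (measure_biUnion_finset hdisj fun k _ => hTm k).symm
    have hboxle : volume (⋃ k ∈ Finset.range N, T k) ≤ ENNReal.ofReal (1 + N * s) := by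
      refine le_trans (measure_mono hsub) ?_
      rw [volume_box]
      rw [Finset.prod_eq_single i (fun j _ hj => by simp [hc, if_neg hj])
        (fun h => absurd (Finset.mem_univ i) h)]
      simp [hc]
    calc (N : ENNReal) * volume D = ∑ k ∈ Finset.range N, volume (T k) := by
          simp [hTvol, Finset.sum_const, nsmul_eq_mul]
      _ = volume (⋃ k ∈ Finset.range N, T k) := hunion
      _ ≤ ENNReal.ofReal (1 + N * s) := hboxle
  apply ENNReal.le_of_forall_pos_le_add
  intro ε hε _
  obtain ⟨N, hN⟩ := exists_nat_one_div_lt (show (0:ℝ) < ε from hε)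
  have h := key (N + 1)
  have hsplit : ENNReal.ofReal (1 + ((N:ℕ)+1 : ℕ) * s)
      = (((N:ℕ)+1 : ℕ) : ENNReal) * ENNReal.ofReal (s + 1 / ((N:ℝ)+1)) := by
    rw [← ENNReal.ofReal_natCast, ← ENNReal.ofReal_mul (by positivity)]
    congr 1
    push_cast
    field_simp
    ring
  rw [hsplit] at h
  have hNne : (((N:ℕ)+1 : ℕ) : ENNReal) ≠ 0 := by positivity
  have hNtop : (((N:ℕ)+1 : ℕ) : ENNReal) ≠ ⊤ := ENNReal.natCast_ne_top _
  have hcancel : volume D ≤ ENNReal.ofReal (s + 1 / ((N:ℝ)+1)) :=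
    (ENNReal.mul_le_mul_iff_right hNne hNtop).1 h
  refine hcancel.trans ?_
  rw [ENNReal.ofReal_add hs.le (by positivity)]
  gcongr
  rw [← ENNReal.ofReal_coe_nnreal]
  exact ENNReal.ofReal_le_ofReal (by linarith)


/-- Let `P` be a convex polyhedron (here: a compact convex set) in `ℝ³` with
`P ⊆ [0,1]^3` and `vol(P) ≥ 1/15`.  Then there exists a translation `v ∈ ℝ³` such
that `(1/107)·[0,1]^3 + v ⊆ P`. -/
theorem small_cube_in_large_convex_subset_of_cube (P : Set (EuclideanSpace ℝ (Fin 3)))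
    (hPconv : Convex ℝ P) (hPcomp : IsCompact P)
    (hPsub : P ⊆ {x : EuclideanSpace ℝ (Fin 3) | ∀ i, x i ∈ Set.Icc (0 : ℝ) 1})
    (hvol : ENNReal.ofReal (1 / 15) ≤ MeasureTheory.volume P) :
    ∃ v : EuclideanSpace ℝ (Fin 3),
      (fun x : EuclideanSpace ℝ (Fin 3) => (1 / 107 : ℝ) • x + v) ''
          {x : EuclideanSpace ℝ (Fin 3) | ∀ i, x i ∈ Set.Icc (0 : ℝ) 1} ⊆ P := by
  classical
  set s : ℝ := 1/107 with hs
  have hs0 : (0:ℝ) < s := by norm_num [hs]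
  set e : Fin 3 → EuclideanSpace ℝ (Fin 3) := fun i => s • EuclideanSpace.single i 1 with he
  set C : Set (EuclideanSpace ℝ (Fin 3)) := {x | ∀ i, x i ∈ Set.Icc (0:ℝ) 1} with hC
  have hPm : MeasurableSet P := hPcomp.isClosed.measurableSet
  -- single erosion step
  have step : ∀ (A : Set (EuclideanSpace ℝ (Fin 3))), Convex ℝ A → MeasurableSet A → A ⊆ C →
      ∀ i, Convex ℝ (A ∩ {x | x + e i ∈ A}) ∧ MeasurableSet (A ∩ {x | x + e i ∈ A}) ∧
        (A ∩ {x | x + e i ∈ A}) ⊆ C ∧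
        volume A ≤ volume (A ∩ {x | x + e i ∈ A}) + ENNReal.ofReal s := by
    intro A hconv hm hsub i
    have hpre : {x : EuclideanSpace ℝ (Fin 3) | x + e i ∈ A} = (fun x => x + e i) ⁻¹' A := rfl
    refine ⟨?_, ?_, fun x hx => hsub hx.1, ?_⟩
    · apply hconv.inter
      rw [hpre]
      have : (fun x : EuclideanSpace ℝ (Fin 3) => x + e i) = (fun x => e i + x) := by
        funext x; exact add_comm _ _
      rw [this]
      exact hconv.translate_preimage_right (e i)
    · exact hm.inter (hpre ▸ hm.preimage (measurable_id.add_const _))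
    · have hsplit : A ⊆ (A ∩ {x | x + e i ∈ A}) ∪ (A \ {x | x + e i ∈ A}) := by
        intro x hx
        by_cases hxx : x ∈ {x | x + e i ∈ A}
        · exact Or.inl ⟨hx, hxx⟩
        · exact Or.inr ⟨hx, hxx⟩
      calc volume A ≤ volume ((A ∩ {x | x + e i ∈ A}) ∪ (A \ {x | x + e i ∈ A})) :=
            measure_mono hsplit
        _ ≤ volume (A ∩ {x | x + e i ∈ A}) + volume (A \ {x | x + e i ∈ A}) :=
            measure_union_le _ _
        _ ≤ volume (A ∩ {x | x + e i ∈ A}) + ENNReal.ofReal s := by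
            gcongr
            exact erosion_volume A hconv hm hsub i s hs0
  obtain ⟨h1conv, h1m, h1sub, h1vol⟩ := step P hPconv hPm hPsub 0
  set K1 := P ∩ {x | x + e 0 ∈ P} with hK1
  obtain ⟨h2conv, h2m, h2sub, h2vol⟩ := step K1 h1conv h1m h1sub 1
  set K2 := K1 ∩ {x | x + e 1 ∈ K1} with hK2
  obtain ⟨h3conv, h3m, h3sub, h3vol⟩ := step K2 h2conv h2m h2sub 2
  set K3 := K2 ∩ {x | x + e 2 ∈ K2} with hK3
  have hK3ne : K3.Nonempty := by
    apply nonempty_of_measure_ne_zero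
    intro hzero
    have : ENNReal.ofReal (1/15) ≤ ENNReal.ofReal s + ENNReal.ofReal s + ENNReal.ofReal s := by
      calc ENNReal.ofReal (1/15) ≤ volume P := hvol
        _ ≤ volume K1 + ENNReal.ofReal s := h1vol
        _ ≤ (volume K2 + ENNReal.ofReal s) + ENNReal.ofReal s := by gcongr
        _ ≤ ((volume K3 + ENNReal.ofReal s) + ENNReal.ofReal s) + ENNReal.ofReal s := by gcongr
        _ = ENNReal.ofReal s + ENNReal.ofReal s + ENNReal.ofReal s := by rw [hzero, zero_add]
    rw [← ENNReal.ofReal_add (by positivity) (by positivity),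
        ← ENNReal.ofReal_add (by positivity) (by positivity),
        ENNReal.ofReal_le_ofReal_iff (by positivity)] at this
    rw [hs] at this
    norm_num at this
  obtain ⟨x, hx⟩ := hK3ne
  obtain ⟨a2, b2⟩ := hx
  obtain ⟨a1, b1⟩ := a2
  obtain ⟨a1', b1'⟩ := b2
  obtain ⟨p000, p100⟩ := a1
  obtain ⟨p010, p110⟩ := b1
  obtain ⟨p001, p101⟩ := a1'
  obtain ⟨p011, p111⟩ := b1'
  -- p_{abc} : x + a•e0 + b•e1 + c•e2 ∈ P  (membership as elements)
  have seg : ∀ u : EuclideanSpace ℝ (Fin 3), ∀ i, u ∈ P → u + e i ∈ P →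
      ∀ t : ℝ, t ∈ Icc (0:ℝ) 1 → u + t • e i ∈ P := by
    intro u i hu hu' t ht
    have h := hPconv.add_smul_sub_mem hu hu' ht
    have heq : u + t • (u + e i - u) = u + t • e i := by module
    rwa [heq] at h
  refine ⟨x, ?_⟩
  rintro z ⟨y, hy, rfl⟩
  have ht0 := hy 0
  have ht1 := hy 1
  have ht2 := hy 2
  have q1 : x + y 0 • e 0 ∈ P := seg x 0 p000 p100 _ ht0
  have q2 : (x + e 1) + y 0 • e 0 ∈ P := seg (x + e 1) 0 p010 p110 _ ht0
  have q3 : (x + e 2) + y 0 • e 0 ∈ P := seg (x + e 2) 0 p001 p101 _ ht0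
  have q4 : (x + e 2 + e 1) + y 0 • e 0 ∈ P := seg (x + e 2 + e 1) 0 p011 p111 _ ht0
  have r1 : (x + y 0 • e 0) + y 1 • e 1 ∈ P := by
    apply seg _ 1 q1 _ _ ht1
    have : x + y 0 • e 0 + e 1 = (x + e 1) + y 0 • e 0 := by abel
    rwa [this]
  have r2 : ((x + e 2) + y 0 • e 0) + y 1 • e 1 ∈ P := by
    apply seg _ 1 q3 _ _ ht1
    have : (x + e 2) + y 0 • e 0 + e 1 = (x + e 2 + e 1) + y 0 • e 0 := by abel
    rwa [this]
  have f : ((x + y 0 • e 0) + y 1 • e 1) + y 2 • e 2 ∈ P := by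
    apply seg _ 2 r1 _ _ ht2
    have : (x + y 0 • e 0) + y 1 • e 1 + e 2 = ((x + e 2) + y 0 • e 0) + y 1 • e 1 := by abel
    rwa [this]
  have hdec : y 0 • EuclideanSpace.single 0 (1:ℝ) + y 1 • EuclideanSpace.single 1 (1:ℝ)
      + y 2 • EuclideanSpace.single 2 (1:ℝ) = y := by
    have h := (EuclideanSpace.basisFun (Fin 3) ℝ).toBasis.sum_repr y
    simp only [OrthonormalBasis.coe_toBasis_repr_apply, EuclideanSpace.basisFun_repr,
      OrthonormalBasis.coe_toBasis, EuclideanSpace.basisFun_apply, Fin.sum_univ_three] at h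
    exact h
  have hfinal : s • y + x = ((x + y 0 • e 0) + y 1 • e 1) + y 2 • e 2 := by
    conv_lhs => rw [← hdec]
    simp only [he]
    module
  show s • y + x ∈ P
  rw [hfinal]
  exact f
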